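/- Let p be an odd prime and Q = [A,B,C] a binary quadratic form with integer coefficients such that A ≠ 0, p ∣ A, p ∣ B, p ∤ C, and the p-adic valuation v_p(B² − 4AC) is even (and B² − 4AC ≠ 0). Then both roots r₁, r₂ ∈ ℂ_p of Q(z,1) = Az² + Bz + C satisfy v_p(r_i) ≤ −1. -/

import Mathlib

/-- The additive valuation on a normed field, normalized so that `vp p (p) = 1`
when `‖(p : K)‖ = 1/p` (as holds in `ℂ_p`): `vp x = -log_p ‖x‖`. -/
noncomputable def vp (p : ℕ) {K : Type*} [NormedField K] (x : K) : ℝ :=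
  -Real.logb p ‖x‖

/-- Let `p` be an odd prime and `Q = [A,B,C]` an integral binary
quadratic form with `A ≠ 0`, `p ∣ A`, `p ∣ B`, `p ∤ C`, nonzero discriminant
`B² − 4AC` of even `p`-adic valuation.  Then both roots `r₁, r₂ ∈ ℂ_p` of
`Q(z,1) = Az² + Bz + C` satisfy `v_p(rᵢ) ≤ −1`.
Here `ℂ_p` is modelled by a complete algebraically closed normed field `K` equipped
with an isometric `ℚ_[p]`-algebra structure. -/
theorem stmt6 (p : ℕ) [Fact p.Prime] (hp : p ≠ 2)
    (K : Type*) [NormedField K] [Algebra ℚ_[p] K] [IsAlgClosed K] [CompleteSpace K]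
    (hK : ∀ x : ℚ_[p], ‖algebraMap ℚ_[p] K x‖ = ‖x‖)
    (A B C : ℤ) (hA : A ≠ 0)
    (hpA : (p : ℤ) ∣ A) (hpB : (p : ℤ) ∣ B) (hpC : ¬ (p : ℤ) ∣ C)
    (hdisc : B ^ 2 - 4 * A * C ≠ 0)
    (heven : Even (padicValInt p (B ^ 2 - 4 * A * C)))
    (r₁ r₂ : K)
    (hfac : ∀ z : K, (A : K) * z ^ 2 + (B : K) * z + (C : K) = (A : K) * (z - r₁) * (z - r₂)) :
    vp p r₁ ≤ -1 ∧ vp p r₂ ≤ -1 := by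
  have hprime : p.Prime := Fact.out
  have hp1 : (1:ℝ) < p := by exact_mod_cast hprime.one_lt
  have hp0 : (0:ℝ) < p := by linarith
  have hcast : ∀ n : ℤ, ‖(n : K)‖ = ‖(n : ℚ_[p])‖ := fun n => by
    rw [← map_intCast (algebraMap ℚ_[p] K) n, hK]
  have hUltra : IsUltrametricDist K := by
    refine IsUltrametricDist.isUltrametricDist_of_forall_norm_natCast_le_one fun n => ?_
    rw [← Int.cast_natCast (R := K), hcast]
    exact Padic.norm_int_le_one _
  have : CharZero K := charZero_of_injective_algebraMap (algebraMap ℚ_[p] K).injective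
  set α := ‖(A : K)‖ with hα
  have hA0 : (A : K) ≠ 0 := Int.cast_ne_zero.mpr hA
  have hαpos : 0 < α := norm_pos_iff.mpr hA0
  have hAle : α ≤ (p:ℝ)⁻¹ := by
    rw [hα, hcast]
    have := (Padic.norm_int_le_pow_iff_dvd A 1).mpr (by simpa using hpA)
    simpa using this
  have hBle : ‖(B : K)‖ ≤ (p:ℝ)⁻¹ := by
    rw [hcast]
    have := (Padic.norm_int_le_pow_iff_dvd B 1).mpr (by simpa using hpB)
    simpa using this
  have hCnorm : ‖(C : K)‖ = 1 := by
    rw [hcast]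
    refine le_antisymm (Padic.norm_int_le_one C) (not_lt.mp fun h => hpC ?_)
    exact (Padic.norm_intCast_lt_one_iff (k := C)).mp h
  have hprod : (A : K) * (r₁ * r₂) = (C : K) := by linear_combination -hfac 0
  have hsum : (A : K) * (r₁ + r₂) = -(B : K) := by linear_combination hfac 1 - hfac 0
  -- key symmetric claim
  have key : ∀ s t : K, α * (‖s‖ * ‖t‖) = 1 → α * ‖s + t‖ ≤ (p:ℝ)⁻¹ → (p:ℝ) ≤ ‖t‖ := by
    intro s t hP hS
    by_contra hlt
    push_neg at hlt
    have hs0 : 0 < ‖s‖ := by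
      rcases (norm_nonneg s).lt_or_eq with h | h
      · exact h
      · exfalso; rw [← h] at hP; simp at hP
    have ht0 : 0 < ‖t‖ := by
      rcases (norm_nonneg t).lt_or_eq with h | h
      · exact h
      · exfalso; rw [← h] at hP; simp at hP
    rcases eq_or_ne ‖s‖ ‖t‖ with heqn | hne
    · -- equal norms: forces v_p(A) = 1 and odd disc valuation
      rw [heqn] at hP
      -- α > p⁻²
      have hαgt : (p:ℝ)⁻¹ * (p:ℝ)⁻¹ < α := by
        have h1 : α * (‖t‖ * ‖t‖) = 1 := hP
        have h2 : ‖t‖ * ‖t‖ < p * p := by nlinarith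
        have : 0 < ‖t‖ * ‖t‖ := by positivity
        rw [← mul_inv]
        rw [inv_lt_iff_one_lt_mul₀ (by positivity)]
        calc (1:ℝ) = α * (‖t‖ * ‖t‖) := h1.symm
          _ < α * (p * p) := by nlinarith
          _ = α * (p*p) := rfl
      -- valuation of A is 1, so α = p⁻¹
      have hAv : ‖((A:ℤ) : ℚ_[p])‖ = (p:ℝ) ^ (-(padicValInt p A : ℤ)) := by
        rw [Padic.norm_eq_zpow_neg_valuation (by exact_mod_cast hA), Padic.valuation_intCast]
      have hαv : α = (p:ℝ) ^ (-(padicValInt p A : ℤ)) := by rw [hα, hcast]; exact hAv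
      have ha1 : padicValInt p A = 1 := by
        set a := padicValInt p A
        have hmono := zpow_right_strictMono₀ hp1
        have hle1 : (1:ℤ) ≤ a := by
          by_contra h
          push_neg at h
          have hgt : (-1 : ℤ) < -(a:ℤ) := by omega
          have h2 : ((p:ℝ))^(-1:ℤ) < (p:ℝ)^(-(a:ℤ)) := hmono hgt
          rw [← hαv, zpow_neg, zpow_one] at h2
          linarith
        have hlt2 : (a:ℤ) < 2 := by
          by_contra h
          push_neg at h
          have hge : (-(a:ℤ)) ≤ -2 := by omega
          have h2 : ((p:ℝ))^(-(a:ℤ)) ≤ (p:ℝ)^(-2:ℤ) := hmono.monotone hge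
          rw [← hαv, zpow_neg, zpow_two, mul_inv] at h2
          linarith
        omega
      have hα1 : α = (p:ℝ)⁻¹ := by rw [hαv, ha1]; norm_num
      -- now the discriminant has valuation exactly 1
      have h4 : ‖((4:ℤ) : K)‖ = 1 := by
        rw [hcast]
        refine le_antisymm (Padic.norm_int_le_one _) (not_lt.mp fun h => ?_)
        have h4d : (p:ℤ) ∣ 4 := (Padic.norm_intCast_lt_one_iff (k := (4:ℤ))).mp h
        have hn : p ∣ 2 ^ 2 := by exact_mod_cast h4d
        exact hp ((Nat.prime_dvd_prime_iff_eq hprime Nat.prime_two).mp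
          (hprime.dvd_of_dvd_pow hn))
      have hy : ‖(4:ℤ) * (A:K) * (C:K)‖ = (p:ℝ)⁻¹ := by
        rw [norm_mul, norm_mul, h4, ← hα, hCnorm, hα1]; ring
      have hx : ‖((B:K))^2‖ < (p:ℝ)⁻¹ := by
        rw [norm_pow]
        calc ‖(B:K)‖^2 ≤ (p:ℝ)⁻¹ * (p:ℝ)⁻¹ := by nlinarith [norm_nonneg (B:K)]
          _ < (p:ℝ)⁻¹ := by
            rw [mul_lt_iff_lt_one_right (by positivity)]
            exact inv_lt_one_of_one_lt₀ hp1
      have hDnorm : ‖((B:K))^2 - (4:ℤ) * (A:K) * (C:K)‖ = (p:ℝ)⁻¹ := by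
        rw [sub_eq_add_neg, IsUltrametricDist.norm_add_eq_max_of_norm_ne_norm
          (by rw [norm_neg, hy]; exact ne_of_lt hx), norm_neg, hy]
        exact max_eq_right (le_of_lt hx)
      have hDcast : ((B ^ 2 - 4 * A * C : ℤ) : K) = ((B:K))^2 - (4:ℤ) * (A:K) * (C:K) := by
        push_cast; ring
      have hDv : ‖((B ^ 2 - 4 * A * C : ℤ) : ℚ_[p])‖
          = (p:ℝ) ^ (-(padicValInt p (B ^ 2 - 4 * A * C) : ℤ)) := by
        rw [Padic.norm_eq_zpow_neg_valuation (by exact_mod_cast hdisc), Padic.valuation_intCast]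
      have : (p:ℝ) ^ (-(padicValInt p (B ^ 2 - 4 * A * C) : ℤ)) = (p:ℝ) ^ (-1 : ℤ) := by
        rw [← hDv, ← hcast, hDcast, hDnorm]
        norm_num
      have hd1 : padicValInt p (B ^ 2 - 4 * A * C) = 1 := by
        have := (zpow_right_strictMono₀ hp1).injective this
        omega
      rw [hd1] at heven
      exact (Nat.not_even_iff_odd.mpr odd_one) heven
    · -- distinct norms: ultrametric equality gives contradiction
      have hmax := IsUltrametricDist.norm_add_eq_max_of_norm_ne_norm hne
      have hsle : ‖s‖ ≤ ‖s + t‖ := by rw [hmax]; exact le_max_left _ _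
      have h1 : α * ‖s‖ ≤ (p:ℝ)⁻¹ := le_trans (by nlinarith) hS
      have : (1:ℝ) < 1 := by
        calc (1:ℝ) = α * ‖s‖ * ‖t‖ := by rw [← hP]; ring
          _ ≤ (p:ℝ)⁻¹ * ‖t‖ := by nlinarith
          _ < (p:ℝ)⁻¹ * p := by
            have : (0:ℝ) < (p:ℝ)⁻¹ := by positivity
            nlinarith
          _ = 1 := by field_simp
      linarith
  have hPn : α * (‖r₁‖ * ‖r₂‖) = 1 := by
    rw [hα, ← norm_mul, ← norm_mul, hprod, hCnorm]
  have hSn : α * ‖r₁ + r₂‖ ≤ (p:ℝ)⁻¹ := by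
    rw [hα, ← norm_mul, hsum, norm_neg]; exact hBle
  have hr2 : (p:ℝ) ≤ ‖r₂‖ := key r₁ r₂ hPn hSn
  have hr1 : (p:ℝ) ≤ ‖r₁‖ := by
    refine key r₂ r₁ ?_ ?_
    · rw [mul_comm ‖r₂‖]; exact hPn
    · rw [add_comm]; exact hSn
  constructor <;>
  · unfold vp
    rw [show (-1 : ℝ) = -(1:ℝ) from rfl, neg_le_neg_iff, ← Real.logb_self_eq_one hp1]
    exact Real.logb_le_logb_of_le hp1 (by positivity) (by assumption)
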